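/- The function x ↦ sin²(tx)/(t²·sin²(x)) is non-increasing on the interval (0, π/t] for any integer t ≥ 2. -/

import Mathlib

open Real

theorem sin_sq_ratio_antitone (t : ℕ) (ht : 2 ≤ t) :
    AntitoneOn (fun x : ℝ => Real.sin (t * x) ^ 2 / ((t : ℝ) ^ 2 * Real.sin x ^ 2))
      (Set.Ioc 0 (Real.pi / t)) := by
  set c : ℝ := (t : ℝ) with hc
  have hc2 : (2:ℝ) ≤ c := by
    rw [hc]; exact_mod_cast ht
  have hc0 : 0 < c := by linarith
  have hpit : 0 < Real.pi / c := div_pos Real.pi_pos hc0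
  have hpilt : Real.pi / c < Real.pi := by
    rw [div_lt_iff₀ hc0]
    nlinarith [Real.pi_pos]
  have hsinx : ∀ x ∈ Set.Ioc (0:ℝ) (Real.pi / c), 0 < Real.sin x := fun x hx =>
    Real.sin_pos_of_pos_of_lt_pi hx.1 (lt_of_le_of_lt hx.2 hpilt)
  have hsinct : ∀ x ∈ Set.Ioc (0:ℝ) (Real.pi / c), 0 ≤ Real.sin (c * x) := by
    intro x hx
    apply Real.sin_nonneg_of_nonneg_of_le_pi (mul_nonneg hc0.le hx.1.le)
    rw [mul_comm]
    exact (le_div_iff₀ hc0).mp hx.2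
  -- φ(x) = c cos(cx) sin x - sin(cx) cos x ≤ 0 on [0, π/c]
  have hφ : ∀ x ∈ Set.Icc (0:ℝ) (Real.pi / c),
      c * Real.cos (c*x) * Real.sin x - Real.sin (c*x) * Real.cos x ≤ 0 := by
    have hanti : AntitoneOn
        (fun x => c * Real.cos (c*x) * Real.sin x - Real.sin (c*x) * Real.cos x)
        (Set.Icc 0 (Real.pi / c)) := by
      apply antitoneOn_of_deriv_nonpos (convex_Icc _ _)
      · fun_prop
      · intro x hx
        have : Differentiable ℝ
            (fun x => c * Real.cos (c*x) * Real.sin x - Real.sin (c*x) * Real.cos x) := by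
          fun_prop
        exact (this x).differentiableWithinAt
      · intro x hx
        rw [interior_Icc] at hx
        have hmul : HasDerivAt (fun y : ℝ => c * y) c x := by
          simpa using (hasDerivAt_id x).const_mul c
        have h1 : HasDerivAt (fun x : ℝ => Real.cos (c*x)) (-Real.sin (c*x) * c) x :=
          (Real.hasDerivAt_cos (c*x)).comp x hmul
        have h2 : HasDerivAt (fun x : ℝ => Real.sin (c*x)) (Real.cos (c*x) * c) x :=
          (Real.hasDerivAt_sin (c*x)).comp x hmul
        have hd : HasDerivAt
            (fun x => c * Real.cos (c*x) * Real.sin x - Real.sin (c*x) * Real.cos x)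
            ((1 - c^2) * (Real.sin (c*x) * Real.sin x)) x := by
          have := ((h1.const_mul c).mul (Real.hasDerivAt_sin x)).sub
            (h2.mul (Real.hasDerivAt_cos x))
          exact this.congr_deriv (by ring)
        rw [hd.deriv]
        have hs1 : 0 ≤ Real.sin (c*x) := hsinct x ⟨hx.1, hx.2.le⟩
        have hs2 : 0 ≤ Real.sin x := (hsinx x ⟨hx.1, hx.2.le⟩).le
        have hcsq : (1:ℝ) - c^2 ≤ 0 := by nlinarith
        exact mul_nonpos_of_nonpos_of_nonneg hcsq (mul_nonneg hs1 hs2)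
    intro x hx
    have h0 : (0:ℝ) ∈ Set.Icc (0:ℝ) (Real.pi / c) := ⟨le_refl _, hpit.le⟩
    have := hanti h0 hx hx.1
    simpa using this
  -- g antitone
  have hg : AntitoneOn (fun x => Real.sin (c*x) / (c * Real.sin x))
      (Set.Ioc 0 (Real.pi/c)) := by
    apply antitoneOn_of_deriv_nonpos (convex_Ioc _ _)
    · apply ContinuousOn.div (by fun_prop) (by fun_prop)
      intro x hx
      exact (mul_pos hc0 (hsinx x hx)).ne'
    · intro x hx
      rw [interior_Ioc] at hx
      have hmul : HasDerivAt (fun y : ℝ => c * y) c x := by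
        simpa using (hasDerivAt_id x).const_mul c
      have h2 : HasDerivAt (fun x : ℝ => Real.sin (c*x)) (Real.cos (c*x) * c) x :=
        (Real.hasDerivAt_sin (c*x)).comp x hmul
      have h3 : HasDerivAt (fun x : ℝ => c * Real.sin x) (c * Real.cos x) x :=
        (Real.hasDerivAt_sin x).const_mul c
      have hne : c * Real.sin x ≠ 0 := (mul_pos hc0 (hsinx x ⟨hx.1, hx.2.le⟩)).ne'
      exact (h2.div h3 hne).differentiableAt.differentiableWithinAt
    · intro x hx
      rw [interior_Ioc] at hx
      have hxm : x ∈ Set.Ioc (0:ℝ) (Real.pi / c) := ⟨hx.1, hx.2.le⟩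
      have hmul : HasDerivAt (fun y : ℝ => c * y) c x := by
        simpa using (hasDerivAt_id x).const_mul c
      have h2 : HasDerivAt (fun x : ℝ => Real.sin (c*x)) (Real.cos (c*x) * c) x :=
        (Real.hasDerivAt_sin (c*x)).comp x hmul
      have h3 : HasDerivAt (fun x : ℝ => c * Real.sin x) (c * Real.cos x) x :=
        (Real.hasDerivAt_sin x).const_mul c
      have hne : c * Real.sin x ≠ 0 := (mul_pos hc0 (hsinx x hxm)).ne'
      rw [HasDerivAt.deriv (f := fun x => Real.sin (c*x) / (c * Real.sin x)) (h2.div h3 hne)]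
      apply div_nonpos_of_nonpos_of_nonneg
      · have := hφ x ⟨hx.1.le, hx.2.le⟩
        nlinarith
      · positivity
  -- conclude
  intro a ha b hb hab
  have hga : Real.sin (c*b) / (c * Real.sin b) ≤ Real.sin (c*a) / (c * Real.sin a) :=
    hg ha hb hab
  have hgb0 : 0 ≤ Real.sin (c*b) / (c * Real.sin b) :=
    div_nonneg (hsinct b hb) (mul_pos hc0 (hsinx b hb)).le
  have key : ∀ x ∈ Set.Ioc (0:ℝ) (Real.pi / c),
      Real.sin (c*x) ^ 2 / (c^2 * Real.sin x ^ 2)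
        = (Real.sin (c*x) / (c * Real.sin x))^2 := by
    intro x hx
    rw [div_pow, mul_pow]
  simp only
  rw [key a ha, key b hb]
  exact pow_le_pow_left₀ hgb0 hga 2
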